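/- Unlike in the DeGroot model, consensus in SOM^- is not guaranteed for strongly connected aperiodic influence graphs: there exists a memoryless silence opinion model (SOM^-) whose influence graph is strongly connected and aperiodic, but whose agents do not converge to consensus (there is no v ∈ [0,1] with lim_{t→∞} B_i^t = v for all agents i). -/

import Mathlib

open Finset Filter Topology

noncomputable section

/-- The set of neighbors (contacts) of agent `i`: agents `j ≠ i` with an edge `(j,i)` to `i`,
where the edge relation is `(j,i) ∈ E ↔ I j i ≠ 0`. -/
def nbrs {n : ℕ} (I : Fin n → Fin n → ℝ) (i : Fin n) : Finset (Fin n) :=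
  Finset.univ.filter (fun j => j ≠ i ∧ I j i ≠ 0)

/-- Maximum opinion value in an opinion state. -/
def maxOp {n : ℕ} (hn : 0 < n) (b : Fin n → ℝ) : ℝ :=
  Finset.univ.sup' ⟨⟨0, hn⟩, Finset.mem_univ _⟩ b

/-- Minimum opinion value in an opinion state. -/
def minOp {n : ℕ} (hn : 0 < n) (b : Fin n → ℝ) : ℝ :=
  Finset.univ.inf' ⟨⟨0, hn⟩, Finset.mem_univ _⟩ b

/-- The influence graph is a clique: every pair of distinct agents is connected. -/
def IsClique {n : ℕ} (I : Fin n → Fin n → ℝ) : Prop :=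
  ∀ i j : Fin n, i ≠ j → I i j ≠ 0

/-- A memoryless silence opinion model (SOM⁻) on `n` agents. The edge set is the
support of `I` (so `I i j = 0 ↔ (i,j) ∉ E`). `s t i = 1` means agent `i` is
non-silent at time `t`, `s t i = 0` means silent. -/
structure SOMminus (n : ℕ) where
  /-- influence weights -/
  I : Fin n → Fin n → ℝ
  I_nonneg : ∀ i j, 0 ≤ I i j
  I_le_one : ∀ i j, I i j ≤ 1
  /-- total influence on each agent (from neighbors and itself) is 1 -/
  sum_one : ∀ i, ∑ j ∈ insert i (nbrs I i), I j i = 1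
  /-- tolerance radii -/
  τ : Fin n → ℝ
  τ_mem : ∀ i, τ i ∈ Set.Icc (0:ℝ) 1
  /-- opinion states -/
  B : ℕ → Fin n → ℝ
  /-- silence states -/
  s : ℕ → Fin n → ℝ
  B0_mem : ∀ i, B 0 i ∈ Set.Icc (0:ℝ) 1
  s_bool : ∀ t i, s t i = 0 ∨ s t i = 1
  /-- memoryless opinion update -/
  B_upd : ∀ t i, B (t+1) i =
    B t i + ∑ j ∈ nbrs I i, I j i * s t j * (B t j - B t i)
  /-- silence update: non-silent iff at least ⌈|N_i^t|/2⌉ non-silent neighbors are within tolerance -/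
  s_upd : ∀ t i, (s (t+1) i = 1 ↔
    (((nbrs I i).filter (fun j => s t j = 1)).card + 1) / 2 ≤
      (((nbrs I i).filter (fun j => s t j = 1)).filter
        (fun j => |B t i - B t j| ≤ τ i)).card)

/-- The influence graph is strongly connected: for every pair of distinct agents
there is a directed path (of edges in the support of `I`) from one to the other. -/
def StronglyConnected {n : ℕ} (I : Fin n → Fin n → ℝ) : Prop :=
  ∀ i j : Fin n, i ≠ j → Relation.TransGen (fun a b => I a b ≠ 0) i j

/-- `m` is the length of a cycle of the influence graph: a closed path
`(c 0, c 1)(c 1, c 2)…(c (m-1), c m)` with `c m = c 0` and the intermediate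
nodes `c 1, …, c (m-1)` all distinct. -/
def IsCycleLength {n : ℕ} (I : Fin n → Fin n → ℝ) (m : ℕ) : Prop :=
  0 < m ∧ ∃ c : ℕ → Fin n, c m = c 0 ∧
    (∀ k < m, I (c k) (c (k+1)) ≠ 0) ∧
    (∀ k l, 1 ≤ k → k < m → 1 ≤ l → l < m → c k = c l → k = l)

/-- The influence graph is aperiodic: the greatest common divisor of the lengths of
its cycles is one, i.e. every common divisor of all cycle lengths equals 1. -/
def Aperiodic {n : ℕ} (I : Fin n → Fin n → ℝ) : Prop :=
  ∀ d : ℕ, (∀ m, IsCycleLength I m → d ∣ m) → d = 1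

def Imat : Fin 5 → Fin 5 → ℝ :=
  ![![1/3, 1/2, 0, 0, 1/3],
    ![1/3, 1/2, 0, 0, 0],
    ![0, 0, 1/3, 1/2, 1/3],
    ![0, 0, 1/3, 1/2, 0],
    ![1/3, 0, 1/3, 0, 1/3]]

def Bvec : Fin 5 → ℝ := ![0, 0, 1, 1, 1/2]
def svec : Fin 5 → ℝ := ![1, 1, 1, 1, 0]

lemma nbrs0 : nbrs Imat 0 = {1, 4} := by
  ext j; fin_cases j <;> simp [nbrs, Imat, Matrix.vecHead, Matrix.vecTail]
lemma nbrs1 : nbrs Imat 1 = {0} := by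
  ext j; fin_cases j <;> simp [nbrs, Imat, Matrix.vecHead, Matrix.vecTail]
lemma nbrs2 : nbrs Imat 2 = {3, 4} := by
  ext j; fin_cases j <;> simp [nbrs, Imat, Matrix.vecHead, Matrix.vecTail]
lemma nbrs3 : nbrs Imat 3 = {2} := by
  ext j; fin_cases j <;> simp [nbrs, Imat, Matrix.vecHead, Matrix.vecTail]
lemma nbrs4 : nbrs Imat 4 = {0, 2} := by
  ext j; fin_cases j <;> simp [nbrs, Imat, Matrix.vecHead, Matrix.vecTail]

lemma sum1 : ∀ i, ∑ j ∈ insert i (nbrs Imat i), Imat j i = 1 := by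
  intro i
  fin_cases i
  · show ∑ j ∈ insert (0:Fin 5) (nbrs Imat 0), Imat j 0 = 1
    rw [nbrs0, show (insert (0:Fin 5) ({1,4} : Finset (Fin 5))) = {0,1,4} from rfl,
      Finset.sum_insert (by decide), Finset.sum_insert (by decide), Finset.sum_singleton]
    simp [Imat, Matrix.vecHead, Matrix.vecTail] <;> norm_num
  · show ∑ j ∈ insert (1:Fin 5) (nbrs Imat 1), Imat j 1 = 1
    rw [nbrs1, show (insert (1:Fin 5) ({0} : Finset (Fin 5))) = {1,0} from rfl,
      Finset.sum_insert (by decide), Finset.sum_singleton]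
    simp [Imat, Matrix.vecHead, Matrix.vecTail] <;> norm_num
  · show ∑ j ∈ insert (2:Fin 5) (nbrs Imat 2), Imat j 2 = 1
    rw [nbrs2, show (insert (2:Fin 5) ({3,4} : Finset (Fin 5))) = {2,3,4} from rfl,
      Finset.sum_insert (by decide), Finset.sum_insert (by decide), Finset.sum_singleton]
    simp [Imat, Matrix.vecHead, Matrix.vecTail] <;> norm_num
  · show ∑ j ∈ insert (3:Fin 5) (nbrs Imat 3), Imat j 3 = 1
    rw [nbrs3, show (insert (3:Fin 5) ({2} : Finset (Fin 5))) = {3,2} from rfl,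
      Finset.sum_insert (by decide), Finset.sum_singleton]
    simp [Imat, Matrix.vecHead, Matrix.vecTail] <;> norm_num
  · show ∑ j ∈ insert (4:Fin 5) (nbrs Imat 4), Imat j 4 = 1
    rw [nbrs4, show (insert (4:Fin 5) ({0,2} : Finset (Fin 5))) = {4,0,2} from rfl,
      Finset.sum_insert (by decide), Finset.sum_insert (by decide), Finset.sum_singleton]
    simp [Imat, Matrix.vecHead, Matrix.vecTail] <;> norm_num

lemma fixB : ∀ i, (∑ j ∈ nbrs Imat i, Imat j i * svec j * (Bvec j - Bvec i)) = 0 := by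
  intro i
  fin_cases i
  · show (∑ j ∈ nbrs Imat 0, Imat j 0 * svec j * (Bvec j - Bvec 0)) = 0
    rw [nbrs0, show ({1,4} : Finset (Fin 5)) = {1,4} from rfl,
      Finset.sum_insert (by decide), Finset.sum_singleton]
    simp [Imat, Bvec, svec, Matrix.vecHead, Matrix.vecTail] <;> norm_num
  · show (∑ j ∈ nbrs Imat 1, Imat j 1 * svec j * (Bvec j - Bvec 1)) = 0
    rw [nbrs1, Finset.sum_singleton]
    simp [Imat, Bvec, svec, Matrix.vecHead, Matrix.vecTail] <;> norm_num
  · show (∑ j ∈ nbrs Imat 2, Imat j 2 * svec j * (Bvec j - Bvec 2)) = 0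
    rw [nbrs2, Finset.sum_insert (by decide), Finset.sum_singleton]
    simp [Imat, Bvec, svec, Matrix.vecHead, Matrix.vecTail] <;> norm_num
  · show (∑ j ∈ nbrs Imat 3, Imat j 3 * svec j * (Bvec j - Bvec 3)) = 0
    rw [nbrs3, Finset.sum_singleton]
    simp [Imat, Bvec, svec, Matrix.vecHead, Matrix.vecTail] <;> norm_num
  · show (∑ j ∈ nbrs Imat 4, Imat j 4 * svec j * (Bvec j - Bvec 4)) = 0
    rw [nbrs4, Finset.sum_insert (by decide), Finset.sum_singleton]
    simp [Imat, Bvec, svec, Matrix.vecHead, Matrix.vecTail] <;> norm_num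

lemma fixs : ∀ i : Fin 5, (svec i = 1 ↔
    (((nbrs Imat i).filter (fun j => svec j = 1)).card + 1) / 2 ≤
      (((nbrs Imat i).filter (fun j => svec j = 1)).filter
        (fun j => |Bvec i - Bvec j| ≤ (1/4 : ℝ))).card) := by
  intro i
  fin_cases i
  · show (svec 0 = 1 ↔
      (((nbrs Imat 0).filter (fun j => svec j = 1)).card + 1) / 2 ≤
        (((nbrs Imat 0).filter (fun j => svec j = 1)).filter
          (fun j => |Bvec 0 - Bvec j| ≤ (1/4 : ℝ))).card)
    rw [nbrs0]
    simp only [Finset.filter_insert, Finset.filter_singleton]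
    simp [Finset.filter_insert, Finset.filter_singleton, Bvec, svec,
      Matrix.vecHead, Matrix.vecTail, abs_le] <;> norm_num
  · show (svec 1 = 1 ↔
      (((nbrs Imat 1).filter (fun j => svec j = 1)).card + 1) / 2 ≤
        (((nbrs Imat 1).filter (fun j => svec j = 1)).filter
          (fun j => |Bvec 1 - Bvec j| ≤ (1/4 : ℝ))).card)
    rw [nbrs1]
    simp only [Finset.filter_insert, Finset.filter_singleton]
    simp [Finset.filter_insert, Finset.filter_singleton, Bvec, svec,
      Matrix.vecHead, Matrix.vecTail, abs_le] <;> norm_num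
  · show (svec 2 = 1 ↔
      (((nbrs Imat 2).filter (fun j => svec j = 1)).card + 1) / 2 ≤
        (((nbrs Imat 2).filter (fun j => svec j = 1)).filter
          (fun j => |Bvec 2 - Bvec j| ≤ (1/4 : ℝ))).card)
    rw [nbrs2]
    simp only [Finset.filter_insert, Finset.filter_singleton]
    simp [Finset.filter_insert, Finset.filter_singleton, Bvec, svec,
      Matrix.vecHead, Matrix.vecTail, abs_le] <;> norm_num
  · show (svec 3 = 1 ↔
      (((nbrs Imat 3).filter (fun j => svec j = 1)).card + 1) / 2 ≤
        (((nbrs Imat 3).filter (fun j => svec j = 1)).filter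
          (fun j => |Bvec 3 - Bvec j| ≤ (1/4 : ℝ))).card)
    rw [nbrs3]
    simp only [Finset.filter_insert, Finset.filter_singleton]
    simp [Finset.filter_insert, Finset.filter_singleton, Bvec, svec,
      Matrix.vecHead, Matrix.vecTail, abs_le] <;> norm_num
  · show (svec 4 = 1 ↔
      (((nbrs Imat 4).filter (fun j => svec j = 1)).card + 1) / 2 ≤
        (((nbrs Imat 4).filter (fun j => svec j = 1)).filter
          (fun j => |Bvec 4 - Bvec j| ≤ (1/4 : ℝ))).card)
    rw [nbrs4]
    simp only [Finset.filter_insert, Finset.filter_singleton]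
    simp [Finset.filter_insert, Finset.filter_singleton, Bvec, svec,
      Matrix.vecHead, Matrix.vecTail, abs_le] <;> norm_num

lemma Imat_nonneg : ∀ i j, 0 ≤ Imat i j := by
  intro i j
  fin_cases i <;> fin_cases j <;>
    simp [Imat, Matrix.vecHead, Matrix.vecTail] <;> norm_num

lemma Imat_le_one : ∀ i j, Imat i j ≤ 1 := by
  intro i j
  fin_cases i <;> fin_cases j <;>
    simp [Imat, Matrix.vecHead, Matrix.vecTail] <;> norm_num

/-- The counterexample model: constant opinion and silence states. -/
def Mctr : SOMminus 5 where
  I := Imat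
  I_nonneg := Imat_nonneg
  I_le_one := Imat_le_one
  sum_one := sum1
  τ := fun _ => 1/4
  τ_mem := fun _ => by norm_num
  B := fun _ => Bvec
  s := fun _ => svec
  B0_mem := by
    intro i
    fin_cases i <;> constructor <;>
      norm_num [Bvec, Matrix.vecHead, Matrix.vecTail]
  s_bool := by
    intro t i
    fin_cases i <;>
      simp [svec, Matrix.vecHead, Matrix.vecTail]
  B_upd := by
    intro t i
    simp [fixB i]
  s_upd := by
    intro t i
    exact fixs i

lemma edge01 : Imat 0 1 ≠ 0 := by simp [Imat, Matrix.vecHead, Matrix.vecTail] <;> norm_num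
lemma edge10 : Imat 1 0 ≠ 0 := by simp [Imat, Matrix.vecHead, Matrix.vecTail] <;> norm_num
lemma edge04 : Imat 0 4 ≠ 0 := by simp [Imat, Matrix.vecHead, Matrix.vecTail] <;> norm_num
lemma edge40 : Imat 4 0 ≠ 0 := by simp [Imat, Matrix.vecHead, Matrix.vecTail] <;> norm_num
lemma edge23 : Imat 2 3 ≠ 0 := by simp [Imat, Matrix.vecHead, Matrix.vecTail] <;> norm_num
lemma edge32 : Imat 3 2 ≠ 0 := by simp [Imat, Matrix.vecHead, Matrix.vecTail] <;> norm_num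
lemma edge24 : Imat 2 4 ≠ 0 := by simp [Imat, Matrix.vecHead, Matrix.vecTail] <;> norm_num
lemma edge42 : Imat 4 2 ≠ 0 := by simp [Imat, Matrix.vecHead, Matrix.vecTail] <;> norm_num
lemma edge00 : Imat 0 0 ≠ 0 := by simp [Imat, Matrix.vecHead, Matrix.vecTail] <;> norm_num

lemma scImat : StronglyConnected Imat := by
  intro i j hij
  set R : Fin 5 → Fin 5 → Prop := fun a b => Imat a b ≠ 0 with hR
  have t01 : Relation.TransGen R 0 1 := .single edge01
  have t04 : Relation.TransGen R 0 4 := .single edge04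
  have t02 : Relation.TransGen R 0 2 := t04.tail edge42
  have t03 : Relation.TransGen R 0 3 := t02.tail edge23
  have t10 : Relation.TransGen R 1 0 := .single edge10
  have t40 : Relation.TransGen R 4 0 := .single edge40
  have t24 : Relation.TransGen R 2 4 := .single edge24
  have t20 : Relation.TransGen R 2 0 := t24.tail edge40
  have t32x : Relation.TransGen R 3 2 := .single edge32
  have t30 : Relation.TransGen R 3 0 := t32x.trans t20
  fin_cases i <;> fin_cases j <;> first
    | exact absurd rfl hij
    | exact t01 | exact t02 | exact t03 | exact t04
    | exact t10 | exact t20 | exact t30 | exact t40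
    | exact t10.trans t01 | exact t10.trans t02 | exact t10.trans t03 | exact t10.trans t04
    | exact t20.trans t01 | exact t20.trans t03 | exact t20.trans t04
    | exact t30.trans t01 | exact t30.trans t02 | exact t30.trans t04
    | exact t40.trans t01 | exact t40.trans t02 | exact t40.trans t03

lemma apImat : Aperiodic Imat := by
  intro d hd
  have h1 : IsCycleLength Imat 1 := by
    refine ⟨one_pos, fun _ => 0, rfl, ?_, ?_⟩
    · intro k hk
      exact edge00
    · intro k l h1 h2
      omega
  have := hd 1 h1
  simpa using this


/-- Consensus in SOM⁻ is not guaranteed for strongly connected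
aperiodic influence graphs: there is an SOM⁻ model whose influence graph is strongly
connected and aperiodic but whose agents do not converge to consensus. -/
theorem stmt_13 :
    ∃ (n : ℕ) (M : SOMminus n), StronglyConnected M.I ∧ Aperiodic M.I ∧
      ¬ ∃ v ∈ Set.Icc (0:ℝ) 1, ∀ i : Fin n, Tendsto (fun t => M.B t i) atTop (𝓝 v) := by
  refine ⟨5, Mctr, scImat, apImat, ?_⟩
  rintro ⟨v, -, hv⟩
  have h0 : Tendsto (fun t : ℕ => Mctr.B t 0) atTop (𝓝 (0:ℝ)) := by
    have : (fun t : ℕ => Mctr.B t 0) = fun _ => (0:ℝ) := by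
      funext t; simp [Mctr, Bvec]
    rw [this]; exact tendsto_const_nhds
  have h2 : Tendsto (fun t : ℕ => Mctr.B t 2) atTop (𝓝 (1:ℝ)) := by
    have : (fun t : ℕ => Mctr.B t 2) = fun _ => (1:ℝ) := by
      funext t; simp [Mctr, Bvec, Matrix.vecHead, Matrix.vecTail]
    rw [this]; exact tendsto_const_nhds
  have e0 : v = 0 := tendsto_nhds_unique (hv 0) h0
  have e1 : v = 1 := tendsto_nhds_unique (hv 2) h2
  rw [e0] at e1
  norm_num at e1
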